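/- For every α ∈ [1, 2], the function λ ↦ h_α(λ²)/λ is concave on the interval (0, 1). -/

import Mathlib

open Finset

/-- The α-logarithm: `ln_α(ξ) = (ξ^(1-α) - 1)/(1-α)` for `α ≠ 1`, and `ln ξ` for `α = 1`. -/
noncomputable def alphaLog (α ξ : ℝ) : ℝ :=
  if α = 1 then Real.log ξ else (ξ ^ (1 - α) - 1) / (1 - α)

/-- The Tsallis–Havrda–Charvát entropy of order `α` of a pmf `p` on a finite set. -/
noncomputable def thc (α : ℝ) {S : Type*} [Fintype S] (p : S → ℝ) : ℝ :=
  if α = 1 then -∑ s, p s * Real.log (p s)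
  else ((∑ s, p s ^ α) - 1) / (1 - α)

/-- The binary THC entropy `h_α(q)`. -/
noncomputable def binThc (α q : ℝ) : ℝ :=
  if α = 1 then -(q * Real.log q) - (1 - q) * Real.log (1 - q)
  else (q ^ α + (1 - q) ^ α - 1) / (1 - α)

/-- First conditional THC entropy (Daróczy form): `H_α(X|Y) = Σ_y p(y)^α H_α(X|y)`,
where `p` is the joint pmf of `(X, Y)`.  (Terms with `p(y) = 0` vanish for `α > 0`.) -/
noncomputable def condThc1 (α : ℝ) {SX SY : Type*} [Fintype SX] [Fintype SY]
    (p : SX × SY → ℝ) : ℝ :=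
  ∑ y, (∑ x, p (x, y)) ^ α * thc α (fun x => p (x, y) / ∑ x', p (x', y))

/-- Second conditional THC entropy: `H̃_α(X|Y) = Σ_y p(y) H_α(X|y)`,
where `p` is the joint pmf of `(X, Y)`.  (Terms with `p(y) = 0` vanish.) -/
noncomputable def condThc2 (α : ℝ) {SX SY : Type*} [Fintype SX] [Fintype SY]
    (p : SX × SY → ℝ) : ℝ :=
  ∑ y, (∑ x, p (x, y)) * thc α (fun x => p (x, y) / ∑ x', p (x', y))

/-- The pmf of a random variable `X` defined on a finite sample space with pmf `μ`. -/
noncomputable def distOf {Ω S : Type*} [Fintype Ω] [DecidableEq S]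
    (μ : Ω → ℝ) (X : Ω → S) : S → ℝ :=
  fun s => ∑ ω ∈ Finset.univ.filter (fun ω => X ω = s), μ ω


section Aux
open Real Set

private lemma auxF_nonneg (α : ℝ) (hα1 : 1 < α) (hα2 : α ≤ 2) {q : ℝ} (hq0 : 0 < q)
    (hq1 : q < 1) :
    0 ≤ (2*α-1)*(α-1)*q^α + 2*α*(α-1)*(q^2*(1-q)^(α-2)) + α*(q*(1-q)^(α-1))
      + (1-q)^α - 1 := by
  have hα0 : (0:ℝ) < α := by linarith
  set F : ℝ → ℝ := fun q => (2*α-1)*(α-1)*q^α + 2*α*(α-1)*(q^2*(1-q)^(α-2))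
      + α*(q*(1-q)^(α-1)) + (1-q)^α - 1 with hF
  have hmono : MonotoneOn F (Set.Ico 0 1) := by
    apply monotoneOn_of_hasDerivWithinAt_nonneg (f' := fun x =>
      α*(α-1)*((2*α-1)*x^(α-1) + 3*(x*(1-x)^(α-2)) + 2*(2-α)*(x^2*(1-x)^(α-3))))
      (convex_Ico 0 1)
    · -- continuity
      have h1 : ContinuousOn (fun x : ℝ => 1 - x) (Set.Ico (0:ℝ) 1) :=
        (continuous_const.sub continuous_id).continuousOn
    
      have hne : ∀ x ∈ Set.Ico (0:ℝ) 1, (1 - x) ≠ 0 ∨ True := fun x hx => Or.inl (by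
        have := hx.2; intro h; nlinarith [hx.1])
      have hne' : ∀ (p : ℝ), ∀ x ∈ Set.Ico (0:ℝ) 1, (fun x : ℝ => 1 - x) x ≠ 0 ∨ 0 ≤ p := by
        intro p x hx
        exact Or.inl (by have := hx.2; intro h; simp at h; nlinarith [hx.1])
      have hA : ContinuousOn (fun x : ℝ => x ^ α) (Set.Ico (0:ℝ) 1) :=
        continuousOn_id.rpow_const (fun x _ => Or.inr hα0.le)
      have hB : ∀ p:ℝ, ContinuousOn (fun x : ℝ => (1-x)^p) (Set.Ico (0:ℝ) 1) :=
        fun p => h1.rpow_const (hne' p)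
      exact ((((continuousOn_const.mul hA).add
        (continuousOn_const.mul (((continuous_pow 2).continuousOn).mul (hB (α-2))))).add
        (continuousOn_const.mul (continuousOn_id.mul (hB (α-1))))).add (hB α)).sub
        continuousOn_const
    · intro x hx
      rw [interior_Ico] at hx
      obtain ⟨hx0, hx1⟩ := hx
      have h1x : (0:ℝ) < 1 - x := by linarith
      have hid : HasDerivAt (fun y : ℝ => 1 - y) (-1) x := by
        exact (hasDerivAt_id' x).const_sub 1
      have d1 : HasDerivAt (fun y : ℝ => y ^ α) (α * x^(α-1)) x :=
        Real.hasDerivAt_rpow_const (Or.inl hx0.ne')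
      have d2 : HasDerivAt (fun y : ℝ => (1-y) ^ (α-2)) (-((α-2) * (1-x)^(α-3))) x := by
        have := hid.rpow_const (p := α - 2) (Or.inl h1x.ne')
        convert this using 1
        rw [show α - 2 - 1 = α - 3 by ring]; ring
      have d3 : HasDerivAt (fun y : ℝ => (1-y) ^ (α-1)) (-((α-1) * (1-x)^(α-2))) x := by
        have := hid.rpow_const (p := α - 1) (Or.inl h1x.ne')
        convert this using 1
        rw [show α - 1 - 1 = α - 2 by ring]; ring
      have d4 : HasDerivAt (fun y : ℝ => (1-y) ^ α) (-(α * (1-x)^(α-1))) x := by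
        have := hid.rpow_const (p := α) (Or.inl h1x.ne')
        convert this using 1; ring
      have dsq : HasDerivAt (fun y : ℝ => y ^ 2) (2*x) x := by
        simpa using hasDerivAt_pow 2 x
      have hall : HasDerivAt F
          (α*(α-1)*((2*α-1)*x^(α-1) + 3*(x*(1-x)^(α-2)) + 2*(2-α)*(x^2*(1-x)^(α-3)))) x := by
        have h := ((((d1.const_mul ((2*α-1)*(α-1))).add
          ((dsq.mul d2).const_mul (2*α*(α-1)))).add
          (((hasDerivAt_id' x).mul d3).const_mul α)).add d4).sub (hasDerivAt_const x 1)
        refine h.congr_deriv ?_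
        ring
      exact hall.hasDerivWithinAt
    · intro x hx
      rw [interior_Ico] at hx
      obtain ⟨hx0, hx1⟩ := hx
      have h1x : (0:ℝ) < 1 - x := by linarith
      have t1 : (0:ℝ) ≤ x^(α-1) := Real.rpow_nonneg hx0.le _
      have t2 : (0:ℝ) ≤ (1-x)^(α-2) := Real.rpow_nonneg h1x.le _
      have t3 : (0:ℝ) ≤ (1-x)^(α-3) := Real.rpow_nonneg h1x.le _
      have : (0:ℝ) ≤ (2*α-1)*x^(α-1) + 3*(x*(1-x)^(α-2)) + 2*(2-α)*(x^2*(1-x)^(α-3)) := by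
        have p1 : (0:ℝ) ≤ (2*α-1)*x^(α-1) := mul_nonneg (by linarith) t1
        have p2 : (0:ℝ) ≤ 3*(x*(1-x)^(α-2)) := by positivity
        have p3 : (0:ℝ) ≤ 2*(2-α)*(x^2*(1-x)^(α-3)) := by
          apply mul_nonneg (by linarith) (by positivity)
        linarith
      exact mul_nonneg (mul_nonneg hα0.le (by linarith)) this
  have h0 : F 0 = 0 := by
    simp [hF, Real.zero_rpow hα0.ne', Real.one_rpow]
  have := hmono (Set.mem_Ico.2 ⟨le_rfl, one_pos⟩) (Set.mem_Ico.2 ⟨hq0.le, hq1⟩) hq0.le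
  rw [h0] at this
  exact this

open Real Set

private lemma case_ne (α : ℝ) (hα1 : 1 < α) (hα2 : α ≤ 2) :
    ConcaveOn ℝ (Set.Ioo 0 1) (fun l : ℝ => ((l^2)^α + (1-l^2)^α - 1) / (1-α) / l) := by
  have hcne : (1:ℝ) - α ≠ 0 := by intro h; linarith [hα1]
  set u : ℝ → ℝ := fun l => ((l^2)^α + (1-l^2)^α - 1) / (1-α) with hu
  set du : ℝ → ℝ := fun l => (2*α*l*((l^2)^(α-1) - (1-l^2)^(α-1))) / (1-α) with hdu
  set ddu : ℝ → ℝ := fun l => (2*α*((l^2)^(α-1) - (1-l^2)^(α-1))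
      + 4*α*(α-1)*l^2*((l^2)^(α-2) + (1-l^2)^(α-2))) / (1-α) with hddu
  have key : ∀ l ∈ Set.Ioo (0:ℝ) 1,
      HasDerivAt u (du l) l ∧ HasDerivAt du (ddu l) l := by
    intro l hl
    obtain ⟨hl0, hl1⟩ := hl
    have hq0 : (0:ℝ) < l^2 := by positivity
    have hq1 : (0:ℝ) < 1 - l^2 := by nlinarith
    have dsq : HasDerivAt (fun y : ℝ => y ^ 2) (2*l) l := by simpa using hasDerivAt_pow 2 l
    have hid2 : HasDerivAt (fun y : ℝ => 1 - y^2) (-(2*l)) l := by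
      exact dsq.const_sub 1
    have dA : HasDerivAt (fun y : ℝ => (y^2)^α) ((2*l)*α*(l^2)^(α-1)) l :=
      dsq.rpow_const (p := α) (Or.inl hq0.ne')
    have dB : HasDerivAt (fun y : ℝ => (1-y^2)^α) (-(2*l)*α*(1-l^2)^(α-1)) l :=
      hid2.rpow_const (p := α) (Or.inl hq1.ne')
    have dA1 : HasDerivAt (fun y : ℝ => (y^2)^(α-1)) ((2*l)*(α-1)*(l^2)^(α-2)) l := by
      have := dsq.rpow_const (p := α-1) (Or.inl hq0.ne')
      rwa [show α - 1 - 1 = α - 2 by ring] at this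
    have dB1 : HasDerivAt (fun y : ℝ => (1-y^2)^(α-1)) (-(2*l)*(α-1)*(1-l^2)^(α-2)) l := by
      have := hid2.rpow_const (p := α-1) (Or.inl hq1.ne')
      rwa [show α - 1 - 1 = α - 2 by ring] at this
    constructor
    · have h := ((dA.add dB).sub_const 1).div_const (1-α)
      refine h.congr_deriv ?_
      simp only [hdu]; ring
    · have hlin : HasDerivAt (fun y : ℝ => 2*α*y) (2*α) l := by
        simpa using (hasDerivAt_id l).const_mul (2*α)
      have h := (hlin.mul (dA1.sub dB1)).div_const (1-α)
      refine h.congr_deriv ?_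
      simp only [hddu, Pi.sub_apply]; ring
  apply concaveOn_of_hasDerivWithinAt2_nonpos (convex_Ioo 0 1)
    (f' := fun l => (du l * l - u l)/l^2)
    (f'' := fun l => (ddu l * l^2 - 2*(du l)*l + 2*(u l))/l^3)
  · intro l hl
    exact ((key l hl).1.continuousAt.div continuousAt_id hl.1.ne').continuousWithinAt
  · intro x hx
    rw [interior_Ioo] at hx
    have h := ((key x hx).1.div (hasDerivAt_id' x) hx.1.ne').hasDerivWithinAt
      (s := interior (Set.Ioo (0:ℝ) 1))
    refine h.congr_deriv ?_
    ring
  · intro x hx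
    rw [interior_Ioo] at hx
    have hv : HasDerivAt (fun l => du l * l - u l) (ddu x * x + du x * 1 - du x) x :=
      ((key x hx).2.mul (hasDerivAt_id' x)).sub (key x hx).1
    have dsq : HasDerivAt (fun y : ℝ => y ^ 2) (2*x) x := by simpa using hasDerivAt_pow 2 x
    have h := (hv.div dsq (pow_ne_zero 2 hx.1.ne')).hasDerivWithinAt
      (s := interior (Set.Ioo (0:ℝ) 1))
    refine h.congr_deriv ?_
    have hx0 : x ≠ 0 := hx.1.ne'
    field_simp
    ring
  · intro x hx
    rw [interior_Ioo] at hx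
    obtain ⟨hx0, hx1⟩ := hx
    have hq0 : (0:ℝ) < x^2 := by positivity
    have hq1 : x^2 < 1 := by nlinarith
    have hq1' : (0:ℝ) < 1 - x^2 := by linarith
    have e1 := Real.rpow_add_one hq0.ne' (α-1)
    rw [show α-1+1 = α by ring] at e1
    have e2 := Real.rpow_add_one hq0.ne' (α-2)
    rw [show α-2+1 = α-1 by ring] at e2
    have e3 := Real.rpow_add_one hq1'.ne' (α-1)
    rw [show α-1+1 = α by ring] at e3
    have e4 := Real.rpow_add_one hq1'.ne' (α-2)
    rw [show α-2+1 = α-1 by ring] at e4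
    have hnum : ddu x * x^2 - 2*(du x)*x + 2*(u x)
        = 2*((2*α-1)*(α-1)*(x^2)^α + 2*α*(α-1)*((x^2)^2*(1-x^2)^(α-2))
            + α*((x^2)*(1-x^2)^(α-1)) + (1-x^2)^α - 1) / (1-α) := by
      simp only [hu, hdu, hddu]
      rw [e1, e2, e3, e4]
      field_simp
      ring
    have hF := auxF_nonneg α hα1 hα2 hq0 hq1
    rw [hnum]
    apply div_nonpos_of_nonpos_of_nonneg _ (by positivity)
    apply div_nonpos_of_nonneg_of_nonpos (by linarith) (by linarith)
private lemma case_one :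
    ConcaveOn ℝ (Set.Ioo 0 1)
      (fun l : ℝ => (-(l^2 * Real.log (l^2)) - (1-l^2) * Real.log (1-l^2)) / l) := by
  set u : ℝ → ℝ := fun l => -(l^2 * Real.log (l^2)) - (1-l^2) * Real.log (1-l^2) with hu
  set du : ℝ → ℝ := fun l => 2*l*(Real.log (1-l^2) - Real.log (l^2)) with hdu
  set ddu : ℝ → ℝ := fun l => 2*(Real.log (1-l^2) - Real.log (l^2)) - 4*(l^2/(1-l^2)) - 4
    with hddu
  have key : ∀ l ∈ Set.Ioo (0:ℝ) 1,
      HasDerivAt u (du l) l ∧ HasDerivAt du (ddu l) l := by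
    intro l hl
    obtain ⟨hl0, hl1⟩ := hl
    have hq0 : (0:ℝ) < l^2 := by positivity
    have hq1 : (0:ℝ) < 1 - l^2 := by nlinarith
    have dsq : HasDerivAt (fun y : ℝ => y ^ 2) (2*l) l := by simpa using hasDerivAt_pow 2 l
    have hid2 : HasDerivAt (fun y : ℝ => 1 - y^2) (-(2*l)) l := by
      exact dsq.const_sub 1
    have hlog1 : HasDerivAt (fun y : ℝ => Real.log (y^2)) (2*l/l^2) l := dsq.log hq0.ne'
    have hlog2 : HasDerivAt (fun y : ℝ => Real.log (1-y^2)) (-(2*l)/(1-l^2)) l :=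
      hid2.log hq1.ne'
    constructor
    · have h := ((dsq.mul hlog1).neg).sub (hid2.mul hlog2)
      refine h.congr_deriv ?_
      simp only [hdu]
      field_simp
      ring
    · have h2l : HasDerivAt (fun y : ℝ => 2*y) 2 l := by
        simpa using (hasDerivAt_id l).const_mul (2:ℝ)
      have h := h2l.mul (hlog2.sub hlog1)
      refine h.congr_deriv ?_
      simp only [hddu, Pi.sub_apply]
      field_simp
      ring
  apply concaveOn_of_hasDerivWithinAt2_nonpos (convex_Ioo 0 1)
    (f' := fun l => (du l * l - u l)/l^2)
    (f'' := fun l => (ddu l * l^2 - 2*(du l)*l + 2*(u l))/l^3)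
  · intro l hl
    exact ((key l hl).1.continuousAt.div continuousAt_id hl.1.ne').continuousWithinAt
  · intro x hx
    rw [interior_Ioo] at hx
    have h := ((key x hx).1.div (hasDerivAt_id' x) hx.1.ne').hasDerivWithinAt
      (s := interior (Set.Ioo (0:ℝ) 1))
    refine h.congr_deriv ?_
    ring
  · intro x hx
    rw [interior_Ioo] at hx
    have hv : HasDerivAt (fun l => du l * l - u l) (ddu x * x + du x * 1 - du x) x :=
      ((key x hx).2.mul (hasDerivAt_id' x)).sub (key x hx).1
    have dsq : HasDerivAt (fun y : ℝ => y ^ 2) (2*x) x := by simpa using hasDerivAt_pow 2 x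
    have h := (hv.div dsq (pow_ne_zero 2 hx.1.ne')).hasDerivWithinAt
      (s := interior (Set.Ioo (0:ℝ) 1))
    refine h.congr_deriv ?_
    have hx0 : x ≠ 0 := hx.1.ne'
    field_simp
    ring
  · intro x hx
    rw [interior_Ioo] at hx
    obtain ⟨hx0, hx1⟩ := hx
    have hq0 : (0:ℝ) < x^2 := by positivity
    have hq1' : (0:ℝ) < 1 - x^2 := by nlinarith
    have hnum : ddu x * x^2 - 2*(du x)*x + 2*(u x)
        = -2*Real.log (1-x^2) - 4*(x^2/(1-x^2)) := by
      simp only [hu, hdu, hddu]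
      field_simp
      ring
    have hlb : -Real.log (1-x^2) ≤ (1-x^2)⁻¹ - 1 := by
      have h := Real.log_le_sub_one_of_pos (inv_pos.2 hq1')
      rwa [Real.log_inv] at h
    have hinv : (1-x^2)⁻¹ - 1 = x^2/(1-x^2) := by field_simp; ring
    rw [hinv] at hlb
    have hr : (0:ℝ) ≤ x^2/(1-x^2) := by positivity
    rw [hnum]
    apply div_nonpos_of_nonpos_of_nonneg (by linarith) (by positivity)

end Aux

/-- For every `α ∈ [1, 2]`, the function `λ ↦ h_α(λ²)/λ` is concave on
the interval `(0, 1)`. -/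
theorem binThc_sq_div_concaveOn_unit (α : ℝ) (hα : α ∈ Set.Icc (1 : ℝ) 2) :
    ConcaveOn ℝ (Set.Ioo 0 1) (fun lam : ℝ => binThc α (lam ^ 2) / lam) := by
  obtain ⟨hα1, hα2⟩ := hα
  rcases eq_or_lt_of_le hα1 with h1 | h1
  · have he : (fun lam : ℝ => binThc α (lam^2)/lam)
        = fun l : ℝ => (-(l^2 * Real.log (l^2)) - (1-l^2) * Real.log (1-l^2)) / l := by
      funext l
      simp only [binThc, if_pos h1.symm]
    rw [he]
    exact case_one
  · have hne : α ≠ 1 := ne_of_gt h1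
    have he : (fun lam : ℝ => binThc α (lam^2)/lam)
        = fun l : ℝ => ((l^2)^α + (1-l^2)^α - 1)/(1-α)/l := by
      funext l
      simp only [binThc, if_neg hne]
    rw [he]
    exact case_ne α h1 hα2
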